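/- For every integer t ≥ 0 there exists a binary LCD [31t+5, 5, 16t+1] code, i.e., a 5-dimensional linear complementary dual subspace of F_2^(31t+5) with minimum weight 16t+1. -/

import Mathlib

set_option maxRecDepth 10000
set_option maxHeartbeats 2000000


/-- The (Hamming) weight of a vector over `F_2`. -/
def wt {n : ℕ} (x : Fin n → ZMod 2) : ℕ :=
  Finset.card (Finset.univ.filter fun i => x i ≠ 0)

/-- The dual code of a binary code `C`, with respect to the standard inner product. -/
def dualCode {n : ℕ} (C : Submodule (ZMod 2) (Fin n → ZMod 2)) :
    Submodule (ZMod 2) (Fin n → ZMod 2) where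
  carrier := {x | ∀ y ∈ C, ∑ i, x i * y i = 0}
  add_mem' := by
    intro a b ha hb y hy
    simp [Pi.add_apply, add_mul, Finset.sum_add_distrib, ha y hy, hb y hy]
  zero_mem' := by
    intro y hy
    simp
  smul_mem' := by
    intro c a ha y hy
    simp only [Pi.smul_apply, smul_eq_mul, mul_assoc, ← Finset.mul_sum, ha y hy, mul_zero]

def dot5 (m v : Fin 5 → ZMod 2) : ZMod 2 := ∑ k, m k * v k

def fvec (b : Fin 31) : Fin 5 → ZMod 2 :=
  fun k => if ((b : ℕ) + 1) / 2 ^ (k : ℕ) % 2 = 1 then 1 else 0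

lemma fact_A : ∀ m : Fin 5 → ZMod 2, m ≠ 0 →
    (∑ b : Fin 31, if dot5 m (fvec b) ≠ 0 then (1:ℕ) else 0) = 16 := by decide

lemma fact_B : ∀ m m' : Fin 5 → ZMod 2,
    ∑ b : Fin 31, dot5 m (fvec b) * dot5 m' (fvec b) = 0 := by decide

def E (t : ℕ) : (Fin 31 × Fin t) ⊕ Fin 5 ≃ Fin (31 * t + 5) :=
  (Equiv.sumCongr finProdFinEquiv (Equiv.refl (Fin 5))).trans finSumFinEquiv

def col (t : ℕ) : (Fin 31 × Fin t) ⊕ Fin 5 → (Fin 5 → ZMod 2) :=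
  Sum.elim (fun p => fvec p.1) (fun j => Pi.single j 1)

def genL (t : ℕ) : (Fin 5 → ZMod 2) →ₗ[ZMod 2] (Fin (31 * t + 5) → ZMod 2) where
  toFun m := fun i => dot5 m (col t ((E t).symm i))
  map_add' a b := by
    funext i
    simp [dot5, add_mul, Finset.sum_add_distrib]
  map_smul' c a := by
    funext i
    simp [dot5, Finset.mul_sum, mul_assoc]

lemma dot5_single (m : Fin 5 → ZMod 2) (j : Fin 5) : dot5 m (Pi.single j 1) = m j := by
  simp [dot5, Pi.single_apply, mul_ite, Finset.sum_ite_eq']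

lemma genL_apply (t : ℕ) (m : Fin 5 → ZMod 2) (s : (Fin 31 × Fin t) ⊕ Fin 5) :
    genL t m (E t s) = dot5 m (col t s) := by
  simp [genL]

lemma genL_inj (t : ℕ) : Function.Injective (genL t) := by
  rw [injective_iff_map_eq_zero]
  intro m hm
  funext j
  have := congrFun hm (E t (Sum.inr j))
  rw [genL_apply] at this
  simpa [col, dot5_single] using this

lemma pairing (t : ℕ) (m m' : Fin 5 → ZMod 2) :
    ∑ i, genL t m i * genL t m' i = dot5 m m' := by
  have h1 : ∑ i, genL t m i * genL t m' i
      = ∑ s, genL t m (E t s) * genL t m' (E t s) :=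
    (Equiv.sum_comp (E t) (fun i => genL t m i * genL t m' i)).symm
  rw [h1]
  simp only [genL_apply]
  rw [Fintype.sum_sum_type]
  have h2 : ∑ p : Fin 31 × Fin t, dot5 m (col t (Sum.inl p)) * dot5 m' (col t (Sum.inl p)) = 0 := by
    rw [Fintype.sum_prod_type]
    simp only [col, Sum.elim_inl]
    have : ∀ b : Fin 31, ∑ _a : Fin t, dot5 m (fvec b) * dot5 m' (fvec b)
        = (t : ZMod 2) * (dot5 m (fvec b) * dot5 m' (fvec b)) := by
      intro b
      simp [Finset.sum_const, nsmul_eq_mul]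
    rw [Finset.sum_congr rfl fun b _ => this b, ← Finset.mul_sum, fact_B, mul_zero]
  rw [h2, zero_add]
  simp only [col, Sum.elim_inr, dot5_single]
  rfl

lemma wt5_pos (m : Fin 5 → ZMod 2) (hm : m ≠ 0) :
    0 < (Finset.univ.filter fun j => m j ≠ 0).card := by
  rw [Finset.card_pos]
  obtain ⟨k, hk⟩ := Function.ne_iff.mp hm
  exact ⟨k, by simpa using hk⟩

lemma wt_genL (t : ℕ) (m : Fin 5 → ZMod 2) (hm : m ≠ 0) :
    wt (genL t m) = 16 * t + (Finset.univ.filter fun j => m j ≠ 0).card := by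
  rw [wt, Finset.card_filter]
  have h1 : ∑ i, (if genL t m i ≠ 0 then (1:ℕ) else 0)
      = ∑ s, (if genL t m (E t s) ≠ 0 then (1:ℕ) else 0) :=
    (Equiv.sum_comp (E t) _).symm
  rw [h1]
  simp only [genL_apply]
  rw [Fintype.sum_sum_type]
  have h2 : ∑ p : Fin 31 × Fin t, (if dot5 m (col t (Sum.inl p)) ≠ 0 then (1:ℕ) else 0)
      = 16 * t := by
    rw [Fintype.sum_prod_type]
    simp only [col, Sum.elim_inl]
    have : ∀ b : Fin 31, ∑ _a : Fin t, (if dot5 m (fvec b) ≠ 0 then (1:ℕ) else 0)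
        = (if dot5 m (fvec b) ≠ 0 then (1:ℕ) else 0) * t := by
      intro b; simp [Finset.sum_const, mul_comm]
    show (∑ x : Fin 31, ∑ _y : Fin t, if dot5 m (fvec x) ≠ 0 then (1:ℕ) else 0) = 16 * t
    rw [Finset.sum_congr rfl fun b _ => this b, ← Finset.sum_mul, fact_A m hm]
  rw [h2]
  congr 1
  simp [col, dot5_single, Finset.card_filter]


/-- A binary code is linear complementary dual (LCD) if it meets its dual trivially. -/
def IsLCD {n : ℕ} (C : Submodule (ZMod 2) (Fin n → ZMod 2)) : Prop :=
  C ⊓ dualCode C = ⊥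

/-- The minimum weight of a binary code: the smallest weight of a nonzero codeword. -/
noncomputable def minWt {n : ℕ} (C : Submodule (ZMod 2) (Fin n → ZMod 2)) : ℕ :=
  sInf {w | ∃ x ∈ C, x ≠ 0 ∧ wt x = w}

/-- `dLCD n k` is the largest minimum weight among all binary LCD `[n,k]` codes. -/
noncomputable def dLCD (n k : ℕ) : ℕ :=
  sSup {d | ∃ C : Submodule (ZMod 2) (Fin n → ZMod 2),
    Module.finrank (ZMod 2) C = k ∧ IsLCD C ∧ minWt C = d}

theorem exists_lcd_31t5 (t : ℕ) :
    ∃ C : Submodule (ZMod 2) (Fin (31 * t + 5) → ZMod 2),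
      Module.finrank (ZMod 2) C = 5 ∧ IsLCD C ∧ minWt C = 16 * t + 1 := by
  refine ⟨LinearMap.range (genL t), ?_, ?_, ?_⟩
  · rw [LinearMap.finrank_range_of_inj (genL_inj t), Module.finrank_fin_fun]
  · rw [IsLCD, eq_bot_iff]
    intro x hx
    rw [Submodule.mem_inf] at hx
    obtain ⟨⟨m, rfl⟩, hx2⟩ := hx
    have hd : ∀ m' : Fin 5 → ZMod 2, dot5 m m' = 0 := by
      intro m'
      rw [← pairing t m m']
      exact hx2 (genL t m') ⟨m', rfl⟩
    have hm : m = 0 := by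
      funext k
      have := hd (Pi.single k 1)
      rw [dot5_single] at this
      simpa using this
    simp [hm]
  · have hone : (Pi.single 0 1 : Fin 5 → ZMod 2) ≠ 0 :=
      Function.ne_iff.mpr ⟨0, by simp⟩
    have hmem : (16 * t + 1) ∈ {w | ∃ x ∈ LinearMap.range (genL t), x ≠ 0 ∧ wt x = w} := by
      refine ⟨genL t (Pi.single 0 1), ⟨Pi.single 0 1, rfl⟩, ?_, ?_⟩
      · intro h
        have := congrFun h (E t (Sum.inr 0))
        rw [genL_apply] at this
        simp [col, dot5_single] at this
      · rw [wt_genL t _ hone]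
        congr 1
    rw [minWt]
    refine le_antisymm (Nat.sInf_le hmem) (le_csInf ⟨_, hmem⟩ ?_)
    rintro w ⟨x, ⟨m, rfl⟩, hx0, rfl⟩
    have hm : m ≠ 0 := by rintro rfl; exact hx0 (map_zero _)
    rw [wt_genL t m hm]
    have := wt5_pos m hm
    omega
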